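/- arXiv:1111.4537 — 2 statements merged into one kernel-verified Lean document; each statement's English description precedes it below -/
import Mathlib

section
/- Let P be a cone in a topological R-module E, and suppose there exists a sequence (α_n) of invertible elements of R with 0 ≺ α_n and α_n → 0. If u ∈ E satisfies 0 ≤_P u and u ≪ c for every c ∈ int P, then u = 0. -/
open Filter Topology

/-- A cone in a topological `R`-module `E`: closed, nonempty, not `{0}`,
closed under nonnegative `R`-linear combinations, and `P ∩ (-P) = {0}`. -/
def IsCone (R : Type*) {E : Type*} [Ring R] [PartialOrder R] [IsOrderedRing R] [AddCommGroup E] [Module R E]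
    [TopologicalSpace E] (P : Set E) : Prop :=
  IsClosed P ∧ P.Nonempty ∧ P ≠ {0} ∧
    (∀ a b : R, 0 ≤ a → 0 ≤ b → ∀ x ∈ P, ∀ y ∈ P, a • x + b • y ∈ P) ∧
    P ∩ (-P) = {0}

variable {R : Type*} [Ring R] [PartialOrder R] [IsOrderedRing R] [TopologicalSpace R] [IsTopologicalRing R]
variable {E : Type*} [AddCommGroup E] [Module R E] [TopologicalSpace E]
  [IsTopologicalAddGroup E] [ContinuousSMul R E]

/-- If there is a sequence of positive invertible scalars tending to , and
 with  for every , then . -/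
theorem eq_zero_of_le_all_interior (P : Set E) (hP : IsCone R P)
    (hint : (interior P).Nonempty)
    (α : ℕ → R) (hunit : ∀ n, IsUnit (α n)) (hpos : ∀ n, 0 < α n)
    (hα : Tendsto α atTop (𝓝 (0 : R)))
    (u : E) (hu : u ∈ P) (h : ∀ c ∈ interior P, c - u ∈ interior P) :
    u = 0 := by
  obtain ⟨hclosed, -, -, hcone, hpointed⟩ := hP
  obtain ⟨c, hc⟩ := hint
  -- α n • c lies in the interior of P
  have hscale : ∀ n, α n • c ∈ interior P := by
    intro n
    set v := (hunit n).unit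
    have hV : IsOpen ((fun x : E => (↑v⁻¹ : R) • x) ⁻¹' interior P) :=
      isOpen_interior.preimage (continuous_const_smul _)
    have hsub : ((fun x : E => (↑v⁻¹ : R) • x) ⁻¹' interior P) ⊆ P := by
      intro x hx
      have hx' : (↑v⁻¹ : R) • x ∈ P := interior_subset hx
      have := hcone (α n) 0 (hpos n).le le_rfl _ hx' _ hx'
      simpa [smul_smul, Units.mul_inv_eq_iff_eq_mul, v] using this
    have hmem : α n • c ∈ (fun x : E => (↑v⁻¹ : R) • x) ⁻¹' interior P := by
      show (↑v⁻¹ : R) • α n • c ∈ interior P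
      have : (↑v⁻¹ : R) • (α n) • c = c := by
        rw [smul_smul]
        have : (↑v⁻¹ : R) * α n = 1 := by
          simpa [v] using v.inv_mul
        rw [this, one_smul]
      rwa [this]
    exact interior_maximal hsub hV hmem
  have hmemP : ∀ n, α n • c - u ∈ P := fun n =>
    interior_subset (h _ (hscale n))
  have hlim : Tendsto (fun n => α n • c - u) atTop (𝓝 (-u)) := by
    have h1 : Tendsto (fun n => α n • c) atTop (𝓝 ((0 : R) • c)) :=
      hα.smul_const c
    rw [zero_smul] at h1
    simpa using h1.sub tendsto_const_nhds
  have hneg : -u ∈ P := hclosed.mem_of_tendsto hlim (Eventually.of_forall hmemP)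
  have : u ∈ P ∩ (-P) := ⟨hu, by simpa using hneg⟩
  rw [hpointed] at this
  exact this
end

section
/- Let P be a cone in a topological R-module E and let λ ∈ K with 0 ≺ 1 − λ, where K is the set of elements k ≽ 0 of R for which Σ k^n converges (so 1 − λ is invertible and λ^n → 0). Then φ : P → P, φ(t) = λ·t, is a comparison function: φ(0) = 0 and φ(t) <_P t for t ∈ P \ {0}; φ is monotone for ≤_P; t ∈ int P implies t − φ(t) ∈ int P; and for t ∈ P \ {0} and 0 ≪ c there exists n_0 with φ^n(t) ≪ c for all n ≥ n_0. -/
open Filter Topology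

variable {R : Type*} [Ring R] [PartialOrder R] [IsOrderedRing R] [TopologicalSpace R] [IsTopologicalRing R]
variable {E : Type*} [AddCommGroup E] [Module R E] [TopologicalSpace E]
  [IsTopologicalAddGroup E] [ContinuousSMul R E]

/-- For `λ ∈ K` with `0 ≺ 1 - λ`, the map `φ(t) = λ • t` is a comparison
function on the cone `P`. -/
theorem smul_is_comparison_function (P : Set E) (hP : IsCone R P)
    (hint : (interior P).Nonempty)
    (lam : R) (hlam : 0 ≤ lam)
    (hser : ∃! S : R, Tendsto (fun N : ℕ => ∑ i ∈ Finset.range (N + 1), lam ^ i)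
      atTop (𝓝 S))
    (hlt : 0 < 1 - lam) :
    (∀ t ∈ P, lam • t ∈ P) ∧
    (lam • (0 : E) = 0 ∧ ∀ t ∈ P, t ≠ 0 → t - lam • t ∈ P ∧ lam • t ≠ t) ∧
    (∀ t₁ t₂ : E, t₂ - t₁ ∈ P → lam • t₂ - lam • t₁ ∈ P) ∧
    (∀ t ∈ interior P, t - lam • t ∈ interior P) ∧
    (∀ t ∈ P, t ≠ 0 → ∀ c ∈ interior P, ∃ n₀ : ℕ, ∀ n ≥ n₀,
      c - lam ^ n • t ∈ interior P) := by
  obtain ⟨hclosed, hne, hne0, hcomb, hcap⟩ := hP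
  have h0P : (0 : E) ∈ P := by
    have h : (0 : E) ∈ P ∩ (-P) := by rw [hcap]; rfl
    exact h.1
  have hsmul : ∀ a : R, 0 ≤ a → ∀ t ∈ P, a • t ∈ P := by
    intro a ha t ht
    have := hcomb a 0 ha le_rfl t ht t ht
    simpa using this
  -- series analysis
  obtain ⟨S, hS, huniq⟩ := hser
  set s : ℕ → R := fun N => ∑ i ∈ Finset.range (N + 1), lam ^ i with hs
  have hshift : Tendsto (fun N => s (N + 1)) atTop (𝓝 S) :=
    hS.comp (tendsto_add_atTop_nat 1)
  have hmulcomm : ∀ N, lam * s N = s N * lam := by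
    intro N
    simp only [hs, Finset.mul_sum, Finset.sum_mul]
    refine Finset.sum_congr rfl fun i _ => ?_
    rw [← pow_succ, ← pow_succ']
  have hrec : ∀ N, s (N + 1) = lam * s N + 1 := by
    intro N
    simpa [hs] using geom_sum_succ (x := lam) (n := N + 1)
  have hrec' : ∀ N, s (N + 1) = s N * lam + 1 := by
    intro N; rw [hrec N, hmulcomm N]
  have hS1 : S = lam * S + 1 := by
    have h1 : Tendsto (fun N => lam * s N + 1) atTop (𝓝 (lam * S + 1)) :=
      (tendsto_const_nhds.mul hS).add tendsto_const_nhds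
    have h2 : Tendsto (fun N => s (N + 1)) atTop (𝓝 (lam * S + 1)) := by
      simpa [hrec] using h1
    have h3 : Tendsto s atTop (𝓝 (lam * S + 1)) :=
      (tendsto_add_atTop_iff_nat 1).mp h2
    exact (huniq _ h3).symm
  have hS2 : S = S * lam + 1 := by
    have h1 : Tendsto (fun N => s N * lam + 1) atTop (𝓝 (S * lam + 1)) :=
      (hS.mul tendsto_const_nhds).add tendsto_const_nhds
    have h2 : Tendsto (fun N => s (N + 1)) atTop (𝓝 (S * lam + 1)) := by
      simpa [hrec'] using h1
    have h3 : Tendsto s atTop (𝓝 (S * lam + 1)) :=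
      (tendsto_add_atTop_iff_nat 1).mp h2
    exact (huniq _ h3).symm
  have hinvL : (1 - lam) * S = 1 := by
    rw [sub_mul, one_mul, sub_eq_iff_eq_add, add_comm]; exact hS1
  have hinvR : S * (1 - lam) = 1 := by
    rw [mul_sub, mul_one, sub_eq_iff_eq_add, add_comm]; exact hS2
  have hpow : Tendsto (fun n : ℕ => lam ^ n) atTop (𝓝 0) := by
    have hd : Tendsto (fun N => s (N + 1) - s N) atTop (𝓝 (S - S)) := hshift.sub hS
    rw [sub_self] at hd
    have heq : ∀ N, s (N + 1) - s N = lam ^ (N + 1) := by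
      intro N
      have : s (N + 1) = s N + lam ^ (N + 1) := by
        simp [hs, Finset.sum_range_succ]
      rw [this, add_sub_cancel_left]
    have hd' : Tendsto (fun N => lam ^ (N + 1)) atTop (𝓝 0) := by
      simpa [heq] using hd
    exact (tendsto_add_atTop_iff_nat 1).mp hd'
  refine ⟨fun t ht => hsmul lam hlam t ht, ⟨smul_zero lam, ?_⟩, ?_, ?_, ?_⟩
  · -- φ(t) <_P t for t ≠ 0
    intro t ht htne
    constructor
    · have h1 : (1 - lam) • t ∈ P := hsmul _ hlt.le t ht
      simpa [sub_smul, one_smul] using h1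
    · intro heq
      apply htne
      have hiter : ∀ n : ℕ, lam ^ n • t = t := by
        intro n
        induction n with
        | zero => simp
        | succ n ih => rw [pow_succ, mul_smul, heq, ih]
      have hten : Tendsto (fun n : ℕ => lam ^ n • t) atTop (𝓝 (0 : E)) := by
        simpa using hpow.smul_const t
      have hten' : Tendsto (fun _ : ℕ => t) atTop (𝓝 (0 : E)) := by
        simpa [hiter] using hten
      have hmem : ∀ U ∈ 𝓝 (0 : E), t ∈ U := by
        intro U hU
        have hev : ∀ᶠ n : ℕ in atTop, t ∈ U :=
          hten'.eventually (eventually_of_mem hU fun x hx => hx)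
        exact hev.exists.choose_spec
      have hnegt : -t ∈ P := by
        rw [← hclosed.closure_eq, mem_closure_iff_nhds]
        intro V hV
        have hcont : ContinuousAt (fun x : E => x - t) 0 :=
          (continuous_id.sub continuous_const).continuousAt
        have hpre : (fun x : E => x - t) ⁻¹' V ∈ 𝓝 (0 : E) := by
          apply hcont
          simpa using hV
        have ht' : t ∈ (fun x : E => x - t) ⁻¹' V := hmem _ hpre
        exact ⟨0, by simpa using ht', h0P⟩
      have hmem0 : t ∈ P ∩ (-P) := ⟨ht, by simpa [Set.mem_neg] using hnegt⟩
      rw [hcap] at hmem0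
      exact hmem0
  · -- monotone
    intro t₁ t₂ h
    have := hsmul lam hlam _ h
    simpa [smul_sub] using this
  · -- interior
    intro t ht
    set μ : R := 1 - lam with hμ
    have hVopen : IsOpen ((fun x : E => S • x) ⁻¹' interior P) :=
      isOpen_interior.preimage (continuous_const_smul S)
    have hVsub : ((fun x : E => S • x) ⁻¹' interior P) ⊆ P := by
      intro x hx
      have h1 : μ • (S • x) ∈ P := hsmul μ hlt.le _ (interior_subset hx)
      rwa [← mul_smul, hμ, hinvL, one_smul] at h1
    have hmemV : μ • t ∈ (fun x : E => S • x) ⁻¹' interior P := by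
      show S • (μ • t) ∈ interior P
      rw [← mul_smul, hμ, hinvR, one_smul]
      exact ht
    have h2 : μ • t ∈ interior P := interior_maximal hVsub hVopen hmemV
    simpa [hμ, sub_smul, one_smul] using h2
  · -- convergence
    intro t ht htne c hc
    have h1 : Tendsto (fun n : ℕ => lam ^ n • t) atTop (𝓝 (0 : E)) := by
      simpa using hpow.smul_const t
    have hten : Tendsto (fun n : ℕ => c - lam ^ n • t) atTop (𝓝 c) := by
      simpa using tendsto_const_nhds.sub h1
    have hev : ∀ᶠ n : ℕ in atTop, c - lam ^ n • t ∈ interior P :=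
      hten.eventually (eventually_of_mem (isOpen_interior.mem_nhds hc) fun x hx => hx)
    exact eventually_atTop.mp hev
end
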